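/- Let 0 < β < 1, κ > 0, ε > 0, q ∈ (0,1], and let λ ∈ (0,1) be the stable root of λ² − (1 + 1/(βq) + κε/(βq))λ + 1/(βq) = 0. Then λ is strictly decreasing in ε: ∂λ/∂ε < 0. -/

import Mathlib

theorem lambda_decreasing_in_eps (β κ q ε : ℝ) (hβ : 0 < β) (hβ1 : β < 1)
    (hκ : 0 < κ) (hq : 0 < q) (hq1 : q ≤ 1) (hε : 0 < ε) (d : ℝ)
    (hderiv : HasDerivAt
      (fun ε : ℝ =>
        ((1 + 1 / (β * q) + κ * ε / (β * q)) -
          Real.sqrt ((1 + 1 / (β * q) + κ * ε / (β * q)) ^ 2 - 4 / (β * q))) / 2)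
      d ε) :
    d < 0 := by
  have hbq : 0 < β * q := mul_pos hβ hq
  have hbq1 : β * q < 1 := lt_of_le_of_lt (by nlinarith) hβ1
  set b : ℝ := 1 / (β * q) with hbdef
  have hb1 : 1 < b := by rw [hbdef]; exact (one_lt_div hbq).mpr hbq1
  have hc : 0 < κ / (β * q) := div_pos hκ hbq
  set c : ℝ := κ / (β * q) with hcdef
  set A : ℝ := 1 + b + κ * ε / (β * q) with hAdef
  have hcε : κ * ε / (β * q) = c * ε := by
    rw [hcdef]; ring
  have ht : 0 < c * ε := mul_pos hc hε
  have hA : 0 < A := by rw [hAdef, hcε]; nlinarith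
  have hg : 0 < A ^ 2 - 4 * b := by
    rw [hAdef, hcε]; nlinarith [sq_nonneg (1 - b), sq_nonneg (c * ε)]
  -- derivative of the affine part
  have h1 : HasDerivAt (fun x : ℝ => 1 + b + κ * x / (β * q)) c ε := by
    have : HasDerivAt (fun x : ℝ => (1 + b) + c * x) c ε := by
      simpa using ((hasDerivAt_id ε).const_mul c).const_add (1 + b)
    convert this using 2 with x
    rw [hcdef]; ring
  have h2 : HasDerivAt (fun x : ℝ => (1 + b + κ * x / (β * q)) ^ 2 - 4 * b)
      (2 * A ^ 1 * c) ε := by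
    simpa using (h1.pow 2).sub_const (4 * b)
  have hgne : A ^ 2 - 4 * b ≠ 0 := ne_of_gt hg
  have h3 : HasDerivAt (fun x : ℝ => Real.sqrt ((1 + b + κ * x / (β * q)) ^ 2 - 4 * b))
      (1 / (2 * Real.sqrt (A ^ 2 - 4 * b)) * (2 * A ^ 1 * c)) ε := by
    exact (Real.hasDerivAt_sqrt hgne).comp ε h2
  have h4 : HasDerivAt (fun x : ℝ =>
      ((1 + b + κ * x / (β * q)) - Real.sqrt ((1 + b + κ * x / (β * q)) ^ 2 - 4 * b)) / 2)
      ((c - 1 / (2 * Real.sqrt (A ^ 2 - 4 * b)) * (2 * A ^ 1 * c)) / 2) ε := by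
    exact (h1.sub h3).div_const 2
  have heq : d = (c - 1 / (2 * Real.sqrt (A ^ 2 - 4 * b)) * (2 * A ^ 1 * c)) / 2 := by
    apply hderiv.unique
    refine h4.congr_of_eventuallyEq (Filter.Eventually.of_forall fun x => ?_)
    beta_reduce
    rw [hbdef]; ring_nf
  rw [heq]
  set s : ℝ := Real.sqrt (A ^ 2 - 4 * b) with hsdef
  have hs : 0 < s := Real.sqrt_pos.mpr hg
  have hsA : s < A := by
    have : s < Real.sqrt (A ^ 2) := Real.sqrt_lt_sqrt (le_of_lt hg) (by nlinarith)
    rwa [Real.sqrt_sq hA.le] at this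
  have key : c * s < A * c := by nlinarith
  have : 1 / (2 * s) * (2 * A ^ 1 * c) = A * c / s := by
    field_simp
  rw [this]
  have : c < A * c / s := by
    rw [lt_div_iff₀ hs]; nlinarith
  linarith
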